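/- The matrix algebra Mₙ(ℂ) can be realized as a (ℤ/2)^k-graded commutative algebra (for some k, with respect to the standard scalar product) if and only if n is a power of 2. -/

import Mathlib

namespace Stmt13Aux
open scoped DirectSum

noncomputable def sgn (t : ZMod 2) : ℂ := (-1) ^ t.val

lemma zmod2_cases : ∀ t : ZMod 2, t = 0 ∨ t = 1 := by decide

@[simp] lemma sgn_zero : sgn 0 = 1 := by simp [sgn]

@[simp] lemma sgn_one : sgn 1 = -1 := by
  have : (1 : ZMod 2).val = 1 := rfl
  simp [sgn, this]

lemma sgn_add (a b : ZMod 2) : sgn (a + b) = sgn a * sgn b := by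
  have h2 : (1 : ZMod 2) + 1 = 0 := by decide
  rcases zmod2_cases a with rfl | rfl <;> rcases zmod2_cases b with rfl | rfl <;>
    simp [h2]

lemma sgn_ne_zero (a : ZMod 2) : sgn a ≠ 0 := by
  rcases zmod2_cases a with rfl | rfl <;> norm_num

def ip {m : ℕ} (a b : Fin m → ZMod 2) : ZMod 2 := ∑ i, a i * b i

lemma ip_add_right {m : ℕ} (a b c : Fin m → ZMod 2) : ip a (b + c) = ip a b + ip a c := by
  simp [ip, mul_add, Finset.sum_add_distrib]

lemma ip_comm {m : ℕ} (a b : Fin m → ZMod 2) : ip a b = ip b a := by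
  simp [ip, mul_comm]

lemma ip_zero_left {m : ℕ} (b : Fin m → ZMod 2) : ip 0 b = 0 := by simp [ip]

lemma sum_sgn {m : ℕ} (a : Fin m → ZMod 2) :
    ∑ w : Fin m → ZMod 2, sgn (ip a w) = if a = 0 then (2 ^ m : ℂ) else 0 := by
  split_ifs with h
  · subst h
    simp only [ip_zero_left, sgn_zero]
    simp [Finset.card_univ]
  · obtain ⟨i₀, hi₀⟩ : ∃ i₀, a i₀ ≠ 0 := by
      by_contra hc
      push_neg at hc
      exact h (funext fun i => hc i)
    have ha1 : a i₀ = 1 := by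
      rcases zmod2_cases (a i₀) with h' | h'
      · exact absurd h' hi₀
      · exact h'
    apply Finset.sum_ninvolution (fun w => w + Pi.single i₀ 1)
    · intro w
      have hs : ip a (Pi.single i₀ 1) = 1 := by
        rw [ip, Finset.sum_eq_single i₀]
        · simp [ha1]
        · intro b _ hb
          simp [Pi.single_apply, hb]
        · simp
      have : ip a (w + Pi.single i₀ 1) = ip a w + 1 := by rw [ip_add_right, hs]
      rw [this, sgn_add, sgn_one]
      ring
    · intro w _ hw
      have := congrFun hw i₀
      simp at this
    · intro w; exact Finset.mem_univ _
    · intro w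
      funext i
      rcases eq_or_ne i i₀ with rfl | hne
      · have h2 : (1 : ZMod 2) + 1 = 0 := by decide
        simp [add_assoc, h2]
      · simp [Pi.single_apply, hne]


variable {m : ℕ} (e : Fin (2 ^ m) ≃ (Fin m → ZMod 2))

/-- Generalized Pauli matrix. -/
noncomputable def P (v : (Fin m → ZMod 2) × (Fin m → ZMod 2)) :
    Matrix (Fin (2 ^ m)) (Fin (2 ^ m)) ℂ :=
  Matrix.of fun i j => if e i = e j + v.1 then sgn (ip v.2 (e j)) else 0

lemma P_apply (v : (Fin m → ZMod 2) × (Fin m → ZMod 2)) (i j : Fin (2 ^ m)) :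
    P e v i j = if e i = e j + v.1 then sgn (ip v.2 (e j)) else 0 := rfl

lemma P_zero : P e 0 = 1 := by
  ext i j
  rw [P_apply, Matrix.one_apply]
  simp [e.apply_eq_iff_eq, eq_comm, ip_zero_left]

lemma P_mul (v w : (Fin m → ZMod 2) × (Fin m → ZMod 2)) :
    P e v * P e w = sgn (ip v.2 w.1) • P e (v + w) := by
  ext i j
  rw [Matrix.mul_apply, Matrix.smul_apply, P_apply, smul_eq_mul]
  have hiff : ∀ l, (e l = e j + w.1) = (l = e.symm (e j + w.1)) := fun l =>
    propext (Equiv.eq_symm_apply e).symm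
  simp only [P_apply, hiff]
  rw [Finset.sum_eq_single (e.symm (e j + w.1))]
  · have he : e (e.symm (e j + w.1)) = e j + w.1 := e.apply_symm_apply _
    rw [if_pos rfl, he]
    have h1 : e j + w.1 + v.1 = e j + (v + w).1 := by
      show _ = e j + (v.1 + w.1); abel
    have h2 : ip (v + w).2 (e j) = ip v.2 (e j) + ip w.2 (e j) := by
      show ip (v.2 + w.2) (e j) = _
      rw [ip_comm, ip_add_right, ip_comm (e j), ip_comm (e j)]
    by_cases hc : e i = e j + (v + w).1
    · rw [if_pos (h1 ▸ hc), if_pos hc, h2, ip_add_right, sgn_add, sgn_add]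
      ring
    · rw [if_neg (h1 ▸ hc), if_neg hc, zero_mul, mul_zero]
  · intro l _ hl
    rw [if_neg hl, mul_zero]
  · simp


lemma add_self_zmod2pi (x : Fin m → ZMod 2) : x + x = 0 := by
  funext i
  have : ∀ t : ZMod 2, t + t = 0 := by decide
  exact this _

lemma add_eq_zero_iff_zmod2pi (x y : Fin m → ZMod 2) : x + y = 0 ↔ x = y := by
  constructor
  · intro h
    have := congrArg (· + y) h
    simpa [add_assoc, add_self_zmod2pi] using this
  · rintro rfl; exact add_self_zmod2pi x

lemma P_linearIndependent : LinearIndependent ℂ (P e) := by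
  rw [Fintype.linearIndependent_iff]
  intro g hg v₀
  have h0 : ∀ j, ∑ v, g v * P e v (e.symm (e j + v₀.1)) j = 0 := by
    intro j
    have := congrFun (congrFun hg (e.symm (e j + v₀.1))) j
    simpa [Matrix.sum_apply] using this
  have hP : ∀ v (j : Fin (2 ^ m)), P e v (e.symm (e j + v₀.1)) j
      = if v.1 = v₀.1 then sgn (ip v.2 (e j)) else 0 := by
    intro v j
    rw [P_apply, e.apply_symm_apply]
    by_cases h : v.1 = v₀.1
    · rw [if_pos (by rw [h]), if_pos h]
    · rw [if_neg (fun hc => h (add_left_cancel hc).symm), if_neg h]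
  have hinner : ∀ v, ∑ j, sgn (ip v₀.2 (e j)) * P e v (e.symm (e j + v₀.1)) j
      = if v = v₀ then (2 ^ m : ℂ) else 0 := by
    intro v
    by_cases h1 : v.1 = v₀.1
    · simp only [hP, if_pos h1]
      have hs : ∀ j : Fin (2 ^ m), sgn (ip v₀.2 (e j)) * sgn (ip v.2 (e j))
          = sgn (ip (v₀.2 + v.2) (e j)) := by
        intro j
        rw [ip_comm (v₀.2 + v.2), ip_add_right, sgn_add, ip_comm (e j) v₀.2, ip_comm (e j) v.2]
      rw [Finset.sum_congr rfl (fun j _ => hs j),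
        Equiv.sum_comp e (fun w => sgn (ip (v₀.2 + v.2) w)), sum_sgn]
      by_cases h2 : v.2 = v₀.2
      · rw [if_pos (by rw [h2]; exact add_self_zmod2pi _),
          if_pos (Prod.ext h1 h2)]
      · rw [if_neg, if_neg (fun hc => h2 (by rw [hc]))]
        intro hc
        rw [add_eq_zero_iff_zmod2pi] at hc
        exact h2 hc.symm
    · simp only [hP, if_neg h1]
      rw [if_neg (fun hc => h1 (by rw [hc]))]
      simp
  have hmain : g v₀ * (2 ^ m : ℂ) = 0 := by
    have e1 : g v₀ * (2 ^ m : ℂ) = ∑ v, g v * (if v = v₀ then (2 ^ m : ℂ) else 0) := by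
      rw [Finset.sum_eq_single v₀]
      · simp
      · intro b _ hb; simp [hb]
      · simp
    rw [e1]
    have e2 : ∀ v, g v * (if v = v₀ then (2 ^ m : ℂ) else 0)
        = ∑ j, sgn (ip v₀.2 (e j)) * (g v * P e v (e.symm (e j + v₀.1)) j) := by
      intro v
      rw [← hinner v, Finset.mul_sum]
      exact Finset.sum_congr rfl fun j _ => by ring
    rw [Finset.sum_congr rfl fun v _ => e2 v, Finset.sum_comm]
    simp only [← Finset.mul_sum, h0, mul_zero, Finset.sum_const_zero]
  have h2m : (2 ^ m : ℂ) ≠ 0 := pow_ne_zero _ (by norm_num)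
  exact (mul_eq_zero.mp hmain).resolve_right h2m

lemma stdBasis_repr (a b : Fin (2 ^ m)) :
    Matrix.single a b 1
      = (2 ^ m : ℂ)⁻¹ • ∑ y : Fin m → ZMod 2, sgn (ip y (e b)) • P e (e a + e b, y) := by
  have h2m : (2 ^ m : ℂ) ≠ 0 := pow_ne_zero _ (by norm_num)
  ext i j
  simp only [Matrix.smul_apply, Matrix.sum_apply, P_apply, smul_eq_mul]
  have hval : ∀ y : Fin m → ZMod 2, sgn (ip y (e b)) * sgn (ip y (e j))
      = sgn (ip (e b + e j) y) := by
    intro y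
    rw [← sgn_add, ← ip_add_right, ip_comm]
  by_cases hc : e i = e j + (e a + e b)
  · rw [Finset.sum_congr rfl fun y _ => by
      rw [if_pos hc, hval y]]
    rw [sum_sgn]
    by_cases hj : j = b
    · subst hj
      have hi : i = a := by
        apply e.injective
        rw [hc]
        have := add_self_zmod2pi (e j)
        calc e j + (e a + e j) = e a + (e j + e j) := by abel
          _ = e a := by rw [add_self_zmod2pi]; abel
      subst hi
      rw [if_pos (add_self_zmod2pi _)]
      simp [Matrix.single, inv_mul_cancel₀ h2m]
    · rw [if_neg (fun hz => hj (e.injective ((add_eq_zero_iff_zmod2pi _ _).mp hz)).symm)]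
      simp [Matrix.single, Ne.symm hj]
  · rw [Finset.sum_congr rfl fun y _ => by rw [if_neg hc, mul_zero]]
    simp only [Finset.sum_const_zero, mul_zero]
    simp only [Matrix.single, Matrix.of_apply]
    rw [if_neg]
    rintro ⟨rfl, rfl⟩
    apply hc
    have h' : e b + (e a + e b) = e a + (e b + e b) := by abel
    rw [h', add_self_zmod2pi, add_zero]


def dblock (a b : ZMod 2) : Fin 3 → ZMod 2 := ![a, a + b, b]

def dmap (v : (Fin m → ZMod 2) × (Fin m → ZMod 2)) : Fin (3 * m) → ZMod 2 :=
  fun j => dblock (v.1 (finProdFinEquiv.symm j).2) (v.2 (finProdFinEquiv.symm j).2)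
    (finProdFinEquiv.symm j).1

lemma dblock_add (a a' b b' : ZMod 2) (t : Fin 3) :
    dblock (a + a') (b + b') t = dblock a b t + dblock a' b' t := by
  fin_cases t <;> simp [dblock] <;> abel

lemma dmap_add (v w : (Fin m → ZMod 2) × (Fin m → ZMod 2)) :
    dmap (v + w) = dmap v + dmap w := by
  funext j
  exact dblock_add _ _ _ _ _

lemma dmap_zero : dmap (0 : (Fin m → ZMod 2) × (Fin m → ZMod 2)) = 0 := by
  funext j
  show dblock 0 0 _ = 0
  generalize (finProdFinEquiv.symm j).1 = t
  fin_cases t <;> simp [dblock]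

lemma dmap_inj : Function.Injective (dmap (m := m)) := by
  intro v w h
  have h0 : ∀ (t : Fin 3) (i : Fin m),
      dblock (v.1 i) (v.2 i) t = dblock (w.1 i) (w.2 i) t := by
    intro t i
    have := congrFun h (finProdFinEquiv (t, i))
    simpa [dmap, Equiv.symm_apply_apply] using this
  refine Prod.ext (funext fun i => ?_) (funext fun i => ?_)
  · have := h0 0 i; simpa [dblock] using this
  · have := h0 2 i; simpa [dblock] using this

lemma dmap_dot (v w : (Fin m → ZMod 2) × (Fin m → ZMod 2)) :
    ∑ j, dmap v j * dmap w j = ip v.2 w.1 + ip w.2 v.1 := by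
  rw [← Equiv.sum_comp (finProdFinEquiv : Fin 3 × Fin m ≃ Fin (3 * m))
    (fun j => dmap v j * dmap w j)]
  simp only [dmap, Equiv.symm_apply_apply]
  rw [Fintype.sum_prod_type, Finset.sum_comm]
  rw [ip, ip, ← Finset.sum_add_distrib]
  refine Finset.sum_congr rfl fun i _ => ?_
  rw [Fin.sum_univ_three]
  have : ∀ a b a' b' : ZMod 2,
      dblock a b 0 * dblock a' b' 0 + dblock a b 1 * dblock a' b' 1
        + dblock a b 2 * dblock a' b' 2 = b * a' + b' * a := by decide
  exact this _ _ _ _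

/-- The grading submodules. -/
noncomputable def grmod (γ : Fin (3 * m) → ZMod 2) :
    Submodule ℂ (Matrix (Fin (2 ^ m)) (Fin (2 ^ m)) ℂ) :=
  Submodule.span ℂ (P e '' {v | dmap v = γ})

lemma grmod_eq_of (v : (Fin m → ZMod 2) × (Fin m → ZMod 2)) :
    grmod e (dmap v) = Submodule.span ℂ {P e v} := by
  unfold grmod
  congr 1
  ext x
  constructor
  · rintro ⟨w, hw, rfl⟩
    rw [dmap_inj hw]
    rfl
  · rintro rfl
    exact ⟨v, rfl, rfl⟩

lemma grmod_eq_bot {γ : Fin (3 * m) → ZMod 2} (h : γ ∉ Set.range (dmap (m := m))) :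
    grmod e γ = ⊥ := by
  unfold grmod
  have : {v | dmap v = γ} = (∅ : Set _) := by
    ext w
    simp only [Set.mem_setOf_eq, Set.mem_empty_iff_false, iff_false]
    exact fun hw => h ⟨w, hw⟩
  rw [this]
  simp

lemma grmod_isInternal : DirectSum.IsInternal (grmod e) := by
  apply DirectSum.isInternal_submodule_of_iSupIndep_of_iSup_eq_top
  · intro γ
    have hsub : (⨆ (j : Fin (3 * m) → ZMod 2) (_ : j ≠ γ), grmod e j)
        ≤ Submodule.span ℂ (P e '' {v | dmap v ≠ γ}) := by
      refine iSup₂_le fun γ' hne => Submodule.span_mono (Set.image_mono ?_)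
      intro v hv
      rw [Set.mem_setOf_eq] at hv ⊢
      rw [hv]; exact hne
    refine Disjoint.mono_right hsub ?_
    exact (P_linearIndependent e).disjoint_span_image
      (Set.disjoint_left.mpr fun v hv hv' => hv' hv)
  · rw [eq_top_iff]
    intro M _
    have hP : ∀ v, P e v ∈ ⨆ γ, grmod e γ := fun v =>
      (le_iSup (grmod e) (dmap v))
        (by rw [grmod_eq_of]; exact Submodule.mem_span_singleton_self _)
    have hE : ∀ a b, Matrix.single a b (1 : ℂ) ∈ ⨆ γ, grmod e γ := by
      intro a b
      rw [stdBasis_repr e a b]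
      exact Submodule.smul_mem _ _ (Submodule.sum_mem _ fun y _ =>
        Submodule.smul_mem _ _ (hP _))
    rw [Matrix.matrix_eq_sum_single M]
    refine Submodule.sum_mem _ fun i _ => Submodule.sum_mem _ fun j _ => ?_
    have hsm : Matrix.single i j (M i j) = M i j • Matrix.single i j (1 : ℂ) := by
      rw [Matrix.smul_single, smul_eq_mul, mul_one]
    rw [hsm]
    exact Submodule.smul_mem _ _ (hE i j)


lemma neg_one_pow_mul_matrix {N : Type*} [Fintype N] [DecidableEq N] (t : ℕ)
    (X : Matrix N N ℂ) : (-1 : Matrix N N ℂ) ^ t * X = ((-1 : ℂ) ^ t) • X := by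
  have h : (-1 : Matrix N N ℂ) = (-1 : ℂ) • 1 := by simp
  rw [h, smul_pow, one_pow, smul_mul_assoc, one_mul]

lemma sgn_skew (α β : ZMod 2) : sgn α = (-1 : ℂ) ^ (α + β).val * sgn β := by
  have h0 : ((0 : ZMod 2)).val = 0 := rfl
  have h1 : ((1 : ZMod 2)).val = 1 := rfl
  have h2 : ((1 : ZMod 2) + 1) = 0 := by decide
  rcases zmod2_cases α with rfl | rfl <;> rcases zmod2_cases β with rfl | rfl <;>
    simp [h0, h1, h2] <;> norm_num

/-- The graded algebra structure. -/
noncomputable def grmodGA : GradedAlgebra (grmod e) where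
  one_mem := by
    have h := grmod_eq_of e 0
    rw [dmap_zero] at h
    rw [h, ← P_zero e]
    exact Submodule.mem_span_singleton_self _
  mul_mem := by
    intro γ γ' a b ha hb
    by_cases h1 : ∃ v, dmap v = γ
    · obtain ⟨v, rfl⟩ := h1
      by_cases h2 : ∃ w, dmap w = γ'
      · obtain ⟨w, rfl⟩ := h2
        rw [grmod_eq_of] at ha hb
        obtain ⟨c, rfl⟩ := Submodule.mem_span_singleton.mp ha
        obtain ⟨c', rfl⟩ := Submodule.mem_span_singleton.mp hb
        rw [← dmap_add, grmod_eq_of]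
        apply Submodule.mem_span_singleton.mpr
        refine ⟨c * c' * sgn (ip v.2 w.1), ?_⟩
        rw [smul_mul_assoc, mul_smul_comm, P_mul, smul_smul, smul_smul]
      · rw [grmod_eq_bot e (fun ⟨w, hw⟩ => h2 ⟨w, hw⟩), Submodule.mem_bot] at hb
        subst hb
        rw [mul_zero]
        exact zero_mem _
    · rw [grmod_eq_bot e (fun ⟨v, hv⟩ => h1 ⟨v, hv⟩), Submodule.mem_bot] at ha
      subst ha
      rw [zero_mul]
      exact zero_mem _
  toDecomposition := (grmod_isInternal e).chooseDecomposition

lemma grmod_comm (γ γ' : Fin (3 * m) → ZMod 2) (a b : Matrix (Fin (2 ^ m)) (Fin (2 ^ m)) ℂ)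
    (ha : a ∈ grmod e γ) (hb : b ∈ grmod e γ') :
    a * b = (-1 : Matrix (Fin (2 ^ m)) (Fin (2 ^ m)) ℂ) ^ (∑ i, γ i * γ' i).val * (b * a) := by
  by_cases h1 : ∃ v, dmap v = γ
  · obtain ⟨v, rfl⟩ := h1
    by_cases h2 : ∃ w, dmap w = γ'
    · obtain ⟨w, rfl⟩ := h2
      rw [grmod_eq_of] at ha hb
      obtain ⟨c, rfl⟩ := Submodule.mem_span_singleton.mp ha
      obtain ⟨c', rfl⟩ := Submodule.mem_span_singleton.mp hb
      rw [neg_one_pow_mul_matrix, dmap_dot]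
      rw [smul_mul_assoc, mul_smul_comm, P_mul, smul_smul, smul_smul,
        smul_mul_assoc, mul_smul_comm, P_mul, smul_smul, smul_smul, smul_smul]
      rw [add_comm w v]
      congr 1
      rw [sgn_skew (ip v.2 w.1) (ip w.2 v.1)]
      ring
    · rw [grmod_eq_bot e (fun ⟨w, hw⟩ => h2 ⟨w, hw⟩), Submodule.mem_bot] at hb
      subst hb
      simp
  · rw [grmod_eq_bot e (fun ⟨v, hv⟩ => h1 ⟨v, hv⟩), Submodule.mem_bot] at ha
    subst ha
    simp


lemma forward {n k : ℕ} (hn : 0 < n)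
    (𝒜 : (Fin k → ZMod 2) → Submodule ℂ (Matrix (Fin n) (Fin n) ℂ))
    [GradedAlgebra 𝒜]
    (hcomm : ∀ (γ γ' : Fin k → ZMod 2) (a b : Matrix (Fin n) (Fin n) ℂ),
        a ∈ 𝒜 γ → b ∈ 𝒜 γ' →
        a * b = (-1 : Matrix (Fin n) (Fin n) ℂ) ^ (∑ i, γ i * γ' i).val * (b * a)) :
    ∃ m : ℕ, n = 2 ^ m := by
  classical
  haveI : Nonempty (Fin n) := Fin.pos_iff_nonempty.mp hn
  have hone : (1 : Matrix (Fin n) (Fin n) ℂ) ≠ 0 := one_ne_zero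
  -- homogeneous commutation, scalar-sign form
  have hcomm' : ∀ (γ γ' : Fin k → ZMod 2) (a b : Matrix (Fin n) (Fin n) ℂ),
      a ∈ 𝒜 γ → b ∈ 𝒜 γ' →
      a * b = ((-1 : ℂ) ^ (∑ i, γ i * γ' i).val) • (b * a) := by
    intro γ γ' a b ha hb
    rw [hcomm γ γ' a b ha hb, neg_one_pow_mul_matrix]
  -- elements of 𝒜 0 are central
  have hA0comm : ∀ a ∈ 𝒜 0, ∀ b, a * b = b * a := by
    intro a ha b
    refine DirectSum.Decomposition.inductionOn 𝒜 (motive := fun b => a * b = b * a) ?_ ?_ ?_ b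
    · simp
    · intro γ' x
      have h := hcomm' 0 γ' a x ha x.2
      have hv : (∑ i, (0 : Fin k → ZMod 2) i * γ' i) = 0 := by simp
      rw [hv] at h
      simpa using h
    · intro x y hx hy
      rw [mul_add, add_mul, hx, hy]
  -- elements of 𝒜 0 are scalar
  have hscalar : ∀ a ∈ 𝒜 0, ∃ c : ℂ, a = c • 1 := by
    intro a ha
    obtain ⟨r, hr⟩ := Matrix.mem_range_scalar_of_commute_single
      (fun i j _ => (hA0comm a ha _).symm)
    exact ⟨r, by rw [← hr, Matrix.scalar_apply, Matrix.smul_one_eq_diagonal]⟩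
  -- squares of homogeneous elements live in 𝒜 0
  have hsq0 : ∀ (γ : Fin k → ZMod 2) (a : Matrix (Fin n) (Fin n) ℂ),
      a ∈ 𝒜 γ → a * a ∈ 𝒜 0 := by
    intro γ a ha
    have h := SetLike.mul_mem_graded ha ha
    have hγ : γ + γ = 0 := by
      funext i
      have : ∀ t : ZMod 2, t + t = 0 := by decide
      exact this _
    rwa [hγ] at h
  -- nonzero homogeneous elements have invertible scalar square
  have hsqne : ∀ (γ : Fin k → ZMod 2) (a : Matrix (Fin n) (Fin n) ℂ),
      a ∈ 𝒜 γ → a ≠ 0 → ∃ c : ℂ, c ≠ 0 ∧ a * a = c • 1 := by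
    intro γ a ha ha0
    obtain ⟨c, hc⟩ := hscalar _ (hsq0 γ a ha)
    refine ⟨c, ?_, hc⟩
    rintro rfl
    rw [zero_smul] at hc
    -- a * x * a = 0 for all x
    have hxa : ∀ x, a * x * a = 0 := by
      refine DirectSum.Decomposition.inductionOn 𝒜 ?_ ?_ ?_
      · simp
      · intro δ x
        rw [hcomm' γ δ a x ha x.2, smul_mul_assoc, mul_assoc, hc, mul_zero, smul_zero]
      · intro x y hx hy
        rw [mul_add, add_mul, hx, hy, add_zero]
    obtain ⟨p, q, hpq⟩ : ∃ p q, a p q ≠ 0 := by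
      by_contra hcon
      push_neg at hcon
      exact ha0 (Matrix.ext fun p q => hcon p q)
    have h3 : a p q * a p q = 0 := by
      have h2 := congrFun (congrFun (hxa (Matrix.single q p 1)) p) q
      simpa [Matrix.mul_apply, Matrix.single, Finset.mul_sum, Finset.sum_ite_eq,
        ite_and, mul_ite, ite_mul, mul_comm] using h2
    exact hpq (mul_self_eq_zero.mp h3)
  -- nonzero components are spanned by any nonzero element
  have hspan : ∀ (γ : Fin k → ZMod 2) (a : Matrix (Fin n) (Fin n) ℂ),
      a ∈ 𝒜 γ → a ≠ 0 → 𝒜 γ = Submodule.span ℂ {a} := by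
    intro γ a ha ha0
    obtain ⟨c, hc0, hc⟩ := hsqne γ a ha ha0
    refine le_antisymm ?_ ?_
    · intro b hb
      have hba : b * a ∈ 𝒜 0 := by
        have h := SetLike.mul_mem_graded hb ha
        have hγ : γ + γ = 0 := by
          funext i
          have : ∀ t : ZMod 2, t + t = 0 := by decide
          exact this _
        rwa [hγ] at h
      obtain ⟨r, hr⟩ := hscalar _ hba
      have key : c • b = r • a := by
        calc c • b = b * (c • 1) := by rw [mul_smul_comm, mul_one]
          _ = b * (a * a) := by rw [hc]
          _ = (b * a) * a := by rw [mul_assoc]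
          _ = (r • 1) * a := by rw [hr]
          _ = r • a := by rw [smul_mul_assoc, one_mul]
      apply Submodule.mem_span_singleton.mpr
      refine ⟨c⁻¹ * r, ?_⟩
      rw [mul_smul, ← key, smul_smul, inv_mul_cancel₀ hc0, one_smul]
    · rw [Submodule.span_le, Set.singleton_subset_iff]
      exact ha
  -- the support is an additive subgroup
  have htt : ∀ t : ZMod 2, t + t = 0 := by decide
  let S : AddSubgroup (Fin k → ZMod 2) :=
    { carrier := {γ | 𝒜 γ ≠ ⊥}
      zero_mem' := (Submodule.ne_bot_iff _).mpr ⟨1, SetLike.one_mem_graded 𝒜, hone⟩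
      add_mem' := by
        intro γ δ hγ hδ
        simp only [Set.mem_setOf_eq] at hγ hδ ⊢
        obtain ⟨a, ha, ha0⟩ := (Submodule.ne_bot_iff _).mp hγ
        obtain ⟨b, hb, hb0⟩ := (Submodule.ne_bot_iff _).mp hδ
        obtain ⟨ca, hca0, hca⟩ := hsqne γ a ha ha0
        obtain ⟨cb, hcb0, hcb⟩ := hsqne δ b hb hb0
        refine (Submodule.ne_bot_iff _).mpr ⟨a * b, SetLike.mul_mem_graded ha hb, ?_⟩
        intro hab
        have e1 : a * b * (b * a) = (cb * ca) • 1 := by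
          calc a * b * (b * a) = a * (b * b) * a := by
                rw [← mul_assoc, mul_assoc a b b]
            _ = (cb * ca) • 1 := by
                rw [hcb, mul_smul_comm, mul_one, smul_mul_assoc, hca, smul_smul]
        rw [hab, zero_mul] at e1
        rcases smul_eq_zero.mp e1.symm with h | h
        · exact mul_ne_zero hcb0 hca0 h
        · exact hone h
      neg_mem' := fun {γ} hγ => by
        have hneg2 : ∀ t : ZMod 2, -t = t := by decide
        have hneg : -γ = γ := funext fun i => hneg2 _
        rwa [hneg] }
  -- dimension count
  have hinternal : DirectSum.IsInternal 𝒜 := DirectSum.Decomposition.isInternal 𝒜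
  have hfin : n * n = ∑ γ, Module.finrank ℂ (𝒜 γ) := by
    have h1 : Module.finrank ℂ (Matrix (Fin n) (Fin n) ℂ) = n * n := by
      rw [Module.finrank_matrix]
      simp
    have h2 : Module.finrank ℂ (⨁ γ, 𝒜 γ) = ∑ γ, Module.finrank ℂ (𝒜 γ) :=
      Module.finrank_directSum _ _
    rw [← h1, ← h2]
    exact (LinearEquiv.finrank_eq (LinearEquiv.ofBijective
      (DirectSum.coeLinearMap 𝒜) hinternal)).symm
  have hcount : ∑ γ, Module.finrank ℂ (𝒜 γ)
      = (Finset.univ.filter (fun γ => 𝒜 γ ≠ ⊥)).card := by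
    rw [Finset.card_filter]
    refine Finset.sum_congr rfl fun γ _ => ?_
    by_cases h : 𝒜 γ = ⊥
    · simp [h]
    · obtain ⟨a, ha, ha0⟩ := (Submodule.ne_bot_iff _).mp h
      rw [if_pos h, hspan γ a ha ha0]
      exact finrank_span_singleton ha0
  have hScard : Nat.card S = (Finset.univ.filter (fun γ => 𝒜 γ ≠ ⊥)).card := by
    rw [Nat.card_eq_fintype_card]
    have e1 : Fintype.card S = Fintype.card {γ // 𝒜 γ ≠ ⊥} :=
      Fintype.card_congr (Equiv.subtypeEquivRight fun γ => Iff.rfl)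
    rw [e1, Fintype.card_subtype]
  have hdvd : Nat.card S ∣ Nat.card (Fin k → ZMod 2) :=
    AddSubgroup.card_addSubgroup_dvd_card S
  have hcardfun : Nat.card (Fin k → ZMod 2) = 2 ^ k := by
    simp [Nat.card_eq_fintype_card]
  have hnn : n * n ∣ 2 ^ k := by
    rw [← hcardfun]
    rw [hfin, hcount, ← hScard]
    exact hdvd
  have hn2 : n ∣ 2 ^ k := dvd_trans (dvd_mul_right n n) hnn
  obtain ⟨m, _, hm⟩ := (Nat.dvd_prime_pow Nat.prime_two).mp hn2
  exact ⟨m, hm⟩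

end Stmt13Aux

/-- The matrix algebra `Mₙ(ℂ)` (`n ≥ 1`) can be realized as a
`(ℤ/2)^k`-graded commutative algebra (for some `k`, with respect to the standard
scalar product) if and only if `n` is a power of `2`. -/
theorem stmt13 (n : ℕ) (hn : 0 < n) :
    (∃ (k : ℕ) (𝒜 : (Fin k → ZMod 2) → Submodule ℂ (Matrix (Fin n) (Fin n) ℂ)),
      Nonempty (GradedAlgebra 𝒜) ∧
      ∀ (γ γ' : Fin k → ZMod 2) (a b : Matrix (Fin n) (Fin n) ℂ),
        a ∈ 𝒜 γ → b ∈ 𝒜 γ' →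
        a * b = (-1 : Matrix (Fin n) (Fin n) ℂ) ^ (∑ i, γ i * γ' i).val * (b * a)) ↔
    ∃ m : ℕ, n = 2 ^ m := by
  constructor
  · rintro ⟨k, 𝒜, ⟨hGA⟩, hcomm⟩
    exact Stmt13Aux.forward hn 𝒜 hcomm
  · rintro ⟨m, rfl⟩
    have hcard : Fintype.card (Fin (2 ^ m)) = Fintype.card (Fin m → ZMod 2) := by
      simp [Fintype.card_fun]
    let e : Fin (2 ^ m) ≃ (Fin m → ZMod 2) := Fintype.equivOfCardEq hcard
    exact ⟨3 * m, Stmt13Aux.grmod e, ⟨Stmt13Aux.grmodGA e⟩,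
      fun γ γ' a b ha hb => Stmt13Aux.grmod_comm e γ γ' a b ha hb⟩
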